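/- Reversibility for geometric weights: let λ₁, λ₂ ∈ (0,1) and let μ be the product probability measure on ℤ₊³ of the geometric distributions Geom(λ₁), Geom(λ₂) and Geom(λ₁λ₂). Then the pushforward of μ under the map R(r,s,t) = (t + (r−s)⁺, t + (s−r)⁺, min(r,s)) (restricted to ℤ₊³) equals μ, i.e. R_*μ = μ. -/
import Mathlib


open MeasureTheory

/-- The geometric distribution with parameter `λ`: the measure on `ℤ₊ = ℕ` assigning
mass `(1 − λ) λ^k` to `k`. -/
noncomputable def geomMeasure (l : ℝ) : Measure ℕ :=
  Measure.sum (fun k : ℕ => (ENNReal.ofReal ((1 - l) * l ^ k)) • Measure.dirac k)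

/-- The map `R(r,s,t) = (t + (r−s)⁺, t + (s−r)⁺, min(r,s))` on `ℤ₊³`
(truncated subtraction on `ℕ` realizes the positive part). -/
def RmapN (p : ℕ × ℕ × ℕ) : ℕ × ℕ × ℕ :=
  (p.2.2 + (p.1 - p.2.1), p.2.2 + (p.2.1 - p.1), min p.1 p.2.1)

lemma RmapN_involutive : Function.Involutive RmapN := by
  rintro ⟨r, s, t⟩
  simp only [RmapN]
  refine Prod.ext ?_ (Prod.ext ?_ ?_) <;> simp <;> omega

lemma geomMeasure_singleton (l : ℝ) (n : ℕ) :
    geomMeasure l {n} = ENNReal.ofReal ((1 - l) * l ^ n) := by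
  rw [geomMeasure, Measure.sum_apply _ (measurableSet_singleton n)]
  rw [tsum_eq_single n]
  · simp
  · intro k hk
    simp [Measure.dirac_apply', hk]

instance geomMeasure_sfinite (l : ℝ) : SFinite (geomMeasure l) := by
  unfold geomMeasure
  infer_instance

/-- **Reversibility for geometric weights:** if `μ` is the product of geometric
distributions with parameters `λ₁`, `λ₂` and `λ₁λ₂`, then `R_* μ = μ`. -/
theorem geometric_reversibility (l₁ l₂ : ℝ) (h₁ : l₁ ∈ Set.Ioo (0:ℝ) 1)
    (h₂ : l₂ ∈ Set.Ioo (0:ℝ) 1) :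
    Measure.map RmapN
        ((geomMeasure l₁).prod ((geomMeasure l₂).prod (geomMeasure (l₁ * l₂)))) =
      (geomMeasure l₁).prod ((geomMeasure l₂).prod (geomMeasure (l₁ * l₂))) := by
  have hmeas : Measurable RmapN := measurable_of_countable _
  have key : ∀ p : ℕ × ℕ × ℕ,
      ((geomMeasure l₁).prod ((geomMeasure l₂).prod (geomMeasure (l₁ * l₂)))) {p}
        = ENNReal.ofReal ((1 - l₁) * l₁ ^ p.1 * ((1 - l₂) * l₂ ^ p.2.1 *
            ((1 - (l₁ * l₂)) * (l₁ * l₂) ^ p.2.2))) := by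
    rintro ⟨r, s, t⟩
    have h1 : ({(r, s, t)} : Set (ℕ × ℕ × ℕ)) = {r} ×ˢ ({s} ×ˢ {t}) := by
      ext ⟨a, b, c⟩; simp [Prod.ext_iff, and_assoc]
    rw [h1, Measure.prod_prod, Measure.prod_prod, geomMeasure_singleton,
      geomMeasure_singleton, geomMeasure_singleton]
    have ha : (0:ℝ) ≤ (1 - l₁) * l₁ ^ r :=
      mul_nonneg (by linarith [h₁.2]) (pow_nonneg h₁.1.le r)
    have hb : (0:ℝ) ≤ (1 - l₂) * l₂ ^ s :=
      mul_nonneg (by linarith [h₂.2]) (pow_nonneg h₂.1.le s)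
    rw [← ENNReal.ofReal_mul hb, ← ENNReal.ofReal_mul ha]
  apply Measure.ext_of_singleton
  intro p
  rw [Measure.map_apply hmeas (measurableSet_singleton p)]
  have hpre : RmapN ⁻¹' {p} = {RmapN p} := by
    ext q
    simp only [Set.mem_preimage, Set.mem_singleton_iff]
    constructor
    · rintro rfl; exact (RmapN_involutive q).symm
    · rintro rfl; exact RmapN_involutive p
  rw [hpre, key, key]
  obtain ⟨r, s, t⟩ := p
  simp only [RmapN]
  congr 1
  have e1 : t + (r - s) + min r s = r + t := by omega
  have e2 : t + (s - r) + min r s = s + t := by omega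
  have expand : ∀ a b : ℕ,
      (1 - l₁) * l₁ ^ a * ((1 - l₂) * l₂ ^ b * ((1 - l₁ * l₂) * (l₁ * l₂) ^ min r s))
        = (1 - l₁) * (1 - l₂) * (1 - l₁ * l₂) * (l₁ ^ (a + min r s) * l₂ ^ (b + min r s)) := by
    intro a b
    rw [mul_pow, pow_add, pow_add]; ring
  rw [expand, e1, e2]
  have : (1 - l₁) * l₁ ^ r * ((1 - l₂) * l₂ ^ s * ((1 - l₁ * l₂) * (l₁ * l₂) ^ t))
      = (1 - l₁) * (1 - l₂) * (1 - l₁ * l₂) * (l₁ ^ (r + t) * l₂ ^ (s + t)) := by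
    rw [mul_pow, pow_add, pow_add]; ring
  rw [this]
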